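/- For a convex bounded set A with 0 ∈ int(A) and a nonzero linear subspace V, p_V(cl(A)) = ⋃_{t ∈ [0,1]} ∂_V( p_V( cl(t • A) ) ), i.e. the projection of the closure of A is the union over t ∈ [0,1] of the boundaries (relative to V) of the projections of the scaled sets t·A. -/

import Mathlib

open scoped Pointwise
open Set

lemma aux_union_frontier {F : Type*} [NormedAddCommGroup F] [NormedSpace ℝ F] [Nontrivial F]
    {K : Set F} (hK : IsClosed K) (hc : Convex ℝ K) (hb : Bornology.IsBounded K)
    (h0 : (0 : F) ∈ interior K) :
    ⋃ t ∈ Set.Icc (0:ℝ) 1, frontier (t • K) = K := by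
  have h0n : K ∈ nhds (0 : F) := mem_interior_iff_mem_nhds.mp h0
  have h0K : (0 : F) ∈ K := interior_subset h0
  apply Subset.antisymm
  · refine iUnion₂_subset fun t ht => ?_
    have hsub : t • K ⊆ K := by
      rintro x ⟨y, hy, rfl⟩
      have := hc hy h0K ht.1 (sub_nonneg.2 ht.2) (by ring)
      simpa using this
    calc frontier (t • K) ⊆ closure (t • K) := frontier_subset_closure
      _ ⊆ closure K := closure_mono hsub
      _ = K := hK.closure_eq
  · intro x hx
    by_cases hx0 : x = 0
    · subst hx0
      refine mem_iUnion₂.2 ⟨0, ⟨le_refl _, zero_le_one⟩, ?_⟩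
      rw [zero_smul_set ⟨0, h0K⟩, ← Set.singleton_zero, frontier, closure_singleton,
        interior_singleton, diff_empty]
      exact rfl
    · set t := gauge K x with htdef
      have hab : Absorbent ℝ K := absorbent_nhds_zero h0n
      have hvb : Bornology.IsVonNBounded ℝ K := NormedSpace.isVonNBounded_of_isBounded _ hb
      have ht0 : 0 < t := (gauge_pos hab hvb).2 hx0
      have ht1 : t ≤ 1 := gauge_le_one_of_mem hx
      refine mem_iUnion₂.2 ⟨t, ⟨ht0.le, ht1⟩, ?_⟩
      have hKt : Convex ℝ (t • K) := hc.smul t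
      have h0t : (t • K) ∈ nhds (0 : F) := by
        rw [← mem_interior_iff_mem_nhds, interior_smul₀ ht0.ne' K]
        exact ⟨0, h0, by simp⟩
      rw [← gauge_eq_one_iff_mem_frontier hKt h0t,
        gauge_smul_left_of_nonneg ht0.le]
      simp only [Pi.smul_apply, smul_eq_mul, ← htdef]
      field_simp

theorem projection_closure_eq_union_of_scaled_frontiers
    {E : Type*} [NormedAddCommGroup E] [InnerProductSpace ℝ E] [FiniteDimensional ℝ E]
    (A : Set E) (hconv : Convex ℝ A) (hbdd : Bornology.IsBounded A)
    (h0 : (0 : E) ∈ interior A)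
    (V : Submodule ℝ E) (hV : V ≠ ⊥) :
    (Submodule.orthogonalProjection V) '' closure A =
      ⋃ t ∈ Set.Icc (0 : ℝ) 1,
        frontier ((Submodule.orthogonalProjection V) '' closure (t • A)) := by
  have hVnt : Nontrivial V := Submodule.nontrivial_iff_ne_bot.mpr hV
  set P : E →L[ℝ] V := Submodule.orthogonalProjection V with hP
  set K : Set V := P '' closure A with hKdef
  have h0A : (0 : E) ∈ A := interior_subset h0
  have hAc : IsCompact (closure A) := hbdd.isCompact_closure
  have hKcomp : IsCompact K := hAc.image P.continuous
  have hKconv : Convex ℝ K := (hconv.closure).linear_image P.toLinearMap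
  have hPsurj : Function.Surjective P := fun v =>
    ⟨v, Submodule.orthogonalProjection_mem_subspace_eq_self v⟩
  have hPopen : IsOpenMap P := P.isOpenMap hPsurj
  have h0K : (0 : V) ∈ interior K := by
    have : P '' interior A ⊆ K := image_mono (interior_subset.trans subset_closure)
    have hopen := hPopen (interior A) isOpen_interior
    exact interior_maximal this hopen ⟨0, h0, map_zero P⟩
  have key : ∀ t ∈ Set.Icc (0:ℝ) 1, P '' closure (t • A) = t • K := by
    intro t _
    rcases eq_or_ne t 0 with rfl | ht
    · have hA0 : (0 : V) ∈ K := ⟨0, subset_closure h0A, map_zero P⟩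
      rw [zero_smul_set ⟨0, h0A⟩, ← Set.singleton_zero, closure_singleton, image_singleton,
        map_zero, zero_smul_set ⟨0, hA0⟩, Set.singleton_zero]
    · rw [closure_smul₀' ht, hKdef, image_smul_set]
  calc K = ⋃ t ∈ Set.Icc (0:ℝ) 1, frontier (t • K) :=
        (aux_union_frontier hKcomp.isClosed hKconv hKcomp.isBounded h0K).symm
    _ = ⋃ t ∈ Set.Icc (0:ℝ) 1, frontier (P '' closure (t • A)) := by
        apply iUnion₂_congr; intro t ht; rw [key t ht]
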